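/- Consider the ODE system in (z, w) ∈ ℝ^(2n) × ℝ^(2n) given by equation (17): Qż - ẇ = -k·u₁·(1/‖u‖ + ‖u‖) and Wż + Zẇ = -k·u₂·(1/‖u‖ + ‖u‖), where u₁ = Qz - w + q, u₂ = z ⊙ w, u = (u₁, u₂), Z = diag(z), W = diag(w). If the initial condition satisfies u(0) ≠ 0 and k = π/(2T_p), then u(t) = 0 for all t ≥ T_p, i.e., the trajectory satisfies the KKT stationarity and complementarity conditions Qz - w + q = 0 and z ⊙ w = 0 at time T_p. -/

import Mathlib

open Set Real

lemma stmt15_sumsq {m : ℕ} (f : Fin m → ℝ) : (∑ i, f i ^ 2) = 0 ↔ ∀ i, f i = 0 := by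
  rw [Finset.sum_eq_zero_iff_of_nonneg (fun i _ => sq_nonneg _)]
  simp [pow_eq_zero_iff]

lemma stmt15_key (φ : ℝ → ℝ) (k Tp : ℝ) (hTp : 0 < Tp) (hk : k = Real.pi / (2 * Tp))
    (hφ0 : ∀ t, 0 ≤ φ t)
    (hd : ∀ t, 0 ≤ t → HasDerivAt φ
      (if φ t = 0 then 0 else -(2*k) * Real.sqrt (φ t) * (1 + φ t)) t) :
    ∀ t, Tp ≤ t → φ t = 0 := by
  have hkpos : 0 < k := by
    rw [hk]; positivity
  set D : ℝ → ℝ := fun t => if φ t = 0 then 0 else -(2*k) * Real.sqrt (φ t) * (1 + φ t)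
    with hD
  have hDle : ∀ t, D t ≤ 0 := by
    intro t
    by_cases h : φ t = 0
    · simp [hD, h]
    · simp only [hD, h, if_false]
      have h1 : 0 ≤ Real.sqrt (φ t) := Real.sqrt_nonneg _
      have h2 : 0 ≤ 1 + φ t := by have := hφ0 t; linarith
      have h3 : 0 ≤ (2*k) * Real.sqrt (φ t) * (1 + φ t) := by positivity
      linarith
  have hanti : AntitoneOn φ (Ici 0) := by
    apply antitoneOn_of_deriv_nonpos (convex_Ici 0)
    · intro t ht
      exact (hd t ht).continuousAt.continuousWithinAt
    · intro t ht
      rw [interior_Ici] at ht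
      exact (hd t (le_of_lt ht)).differentiableAt.differentiableWithinAt
    · intro t ht
      rw [interior_Ici] at ht
      rw [(hd t (le_of_lt ht)).deriv]
      exact hDle t
  have hTp0 : φ Tp = 0 := by
    by_contra h
    have hTppos : 0 < φ Tp := lt_of_le_of_ne (hφ0 Tp) (Ne.symm h)
    have hpos : ∀ t ∈ Icc (0:ℝ) Tp, 0 < φ t := by
      intro t ht
      have := hanti (mem_Ici.2 ht.1) (mem_Ici.2 hTp.le) ht.2
      linarith
    set g : ℝ → ℝ := fun t => Real.arctan (Real.sqrt (φ t)) + k * t with hg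
    have hgderiv : ∀ t ∈ Icc (0:ℝ) Tp, HasDerivAt g 0 t := by
      intro t ht
      have hpt := hpos t ht
      have hne : φ t ≠ 0 := ne_of_gt hpt
      have hs : 0 < Real.sqrt (φ t) := Real.sqrt_pos.2 hpt
      have h1 : HasDerivAt (fun u => Real.sqrt (φ u)) (1 / (2 * Real.sqrt (φ t)) * D t) t :=
        (Real.hasDerivAt_sqrt hne).comp t (hd t ht.1)
      have h2 : HasDerivAt (fun u => Real.arctan (Real.sqrt (φ u)))
          (1 / (1 + Real.sqrt (φ t) ^ 2) * (1 / (2 * Real.sqrt (φ t)) * D t)) t :=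
        (Real.hasDerivAt_arctan _).comp t h1
      have h3 : HasDerivAt g
          (1 / (1 + Real.sqrt (φ t) ^ 2) * (1 / (2 * Real.sqrt (φ t)) * D t) + k) t :=
        h2.add (by simpa using (hasDerivAt_id t).const_mul k)
      convert h3 using 1
      have hsq : Real.sqrt (φ t) ^ 2 = φ t := Real.sq_sqrt (hφ0 t)
      rw [hsq]
      simp only [hD, hne, if_false]
      have h1φ : (0:ℝ) < 1 + φ t := by linarith
      field_simp
      ring
    have hgconst := constant_of_has_deriv_right_zero
      (f := g) (a := 0) (b := Tp)
      (fun t ht => (hgderiv t ht).continuousAt.continuousWithinAt)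
      (fun t ht => ((hgderiv t (Ico_subset_Icc_self ht)).hasDerivWithinAt))
    have := hgconst Tp (right_mem_Icc.2 hTp.le)
    simp only [hg, mul_zero, add_zero] at this
    have hkTp : k * Tp = Real.pi / 2 := by
      rw [hk]; field_simp
    have harctan0 : Real.arctan (Real.sqrt (φ 0)) < Real.pi / 2 := Real.arctan_lt_pi_div_two _
    have harctanTp : 0 ≤ Real.arctan (Real.sqrt (φ Tp)) :=
      by simpa using Real.arctan_strictMono.monotone (Real.sqrt_nonneg (φ Tp))
    rw [hkTp] at this
    linarith
  intro t ht
  have h1 : φ t ≤ φ Tp := hanti (mem_Ici.2 hTp.le) (mem_Ici.2 (hTp.le.trans ht)) ht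
  have := hφ0 t
  linarith




/-- The KKT flow (17): with `u₁ = Qz - w + q`, `u₂ = z ⊙ w`,
`Qż - ẇ = -k u₁ (1/‖u‖ + ‖u‖)` and `Wż + Zẇ = -k u₂ (1/‖u‖ + ‖u‖)`,
`k = π/(2 T_p)`, the trajectory satisfies `Qz - w + q = 0` and `z ⊙ w = 0`
for all `t ≥ T_p`. -/
theorem stmt_15 (n : ℕ) (Q : Matrix (Fin (2*n)) (Fin (2*n)) ℝ) (hQ : Q.PosDef)
    (q : Fin (2*n) → ℝ) (Tp k : ℝ) (hTp : 0 < Tp) (hk : k = Real.pi / (2 * Tp))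
    (z w z' w' : ℝ → Fin (2*n) → ℝ)
    (hz : ∀ t, 0 ≤ t → HasDerivAt z (z' t) t)
    (hw : ∀ t, 0 ≤ t → HasDerivAt w (w' t) t)
    -- u₁, u₂ and ‖u‖ at time t:
    (hflow : ∀ t, 0 ≤ t →
      (Q.mulVec (z t) - w t + q ≠ 0 ∨ (fun i => z t i * w t i) ≠ 0) →
      (Q.mulVec (z' t) - w' t =
        (-(k * (1 / Real.sqrt ((∑ i, (Q.mulVec (z t) - w t + q) i ^ 2)
            + ∑ i, (z t i * w t i)^2)
          + Real.sqrt ((∑ i, (Q.mulVec (z t) - w t + q) i ^ 2)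
            + ∑ i, (z t i * w t i)^2)))) • (Q.mulVec (z t) - w t + q) ∧
      (fun i => w t i * z' t i + z t i * w' t i) =
        (-(k * (1 / Real.sqrt ((∑ i, (Q.mulVec (z t) - w t + q) i ^ 2)
            + ∑ i, (z t i * w t i)^2)
          + Real.sqrt ((∑ i, (Q.mulVec (z t) - w t + q) i ^ 2)
            + ∑ i, (z t i * w t i)^2)))) • (fun i => z t i * w t i)))
    (hstat : ∀ t, 0 ≤ t →
      (Q.mulVec (z t) - w t + q = 0 ∧ (fun i => z t i * w t i) = 0) →
      (Q.mulVec (z' t) - w' t = 0 ∧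
        (fun i => w t i * z' t i + z t i * w' t i) = 0))
    (hinit : Q.mulVec (z 0) - w 0 + q ≠ 0 ∨ (fun i => z 0 i * w 0 i) ≠ 0) :
    ∀ t, Tp ≤ t →
      Q.mulVec (z t) - w t + q = 0 ∧ ∀ i, z t i * w t i = 0 := by
  classical
  set φ : ℝ → ℝ := fun t => (∑ i, (Q.mulVec (z t) - w t + q) i ^ 2)
      + ∑ i, (z t i * w t i)^2 with hφdef
  have hφ0 : ∀ t, 0 ≤ φ t := by
    intro t
    have h1 : (0:ℝ) ≤ ∑ i, (Q.mulVec (z t) - w t + q) i ^ 2 :=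
      Finset.sum_nonneg fun i _ => sq_nonneg _
    have h2 : (0:ℝ) ≤ ∑ i, (z t i * w t i)^2 :=
      Finset.sum_nonneg fun i _ => sq_nonneg _
    simpa [hφdef] using add_nonneg h1 h2
  have hzero : ∀ t, φ t = 0 ↔
      ((∀ i, (Q.mulVec (z t) - w t + q) i = 0) ∧ ∀ i, z t i * w t i = 0) := by
    intro t
    have h1 : (0:ℝ) ≤ ∑ i, (Q.mulVec (z t) - w t + q) i ^ 2 :=
      Finset.sum_nonneg fun i _ => sq_nonneg _
    have h2 : (0:ℝ) ≤ ∑ i, (z t i * w t i)^2 :=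
      Finset.sum_nonneg fun i _ => sq_nonneg _
    constructor
    · intro h
      have e1 : (∑ i, (Q.mulVec (z t) - w t + q) i ^ 2) = 0 := by
        simp only [hφdef] at h; linarith
      have e2 : (∑ i, (z t i * w t i)^2) = 0 := by
        simp only [hφdef] at h; linarith
      exact ⟨(stmt15_sumsq _).1 e1, (stmt15_sumsq _).1 e2⟩
    · rintro ⟨ha, hb⟩
      simp only [hφdef]
      rw [(stmt15_sumsq _).2 ha, (stmt15_sumsq _).2 hb, add_zero]
  -- the raw derivative of φ
  have hderiv : ∀ t, 0 ≤ t → HasDerivAt φ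
      ((∑ i, 2 * (Q.mulVec (z t) - w t + q) i * (Q.mulVec (z' t) - w' t) i)
        + ∑ i, 2 * (z t i * w t i) * (w t i * z' t i + z t i * w' t i)) t := by
    intro t ht
    have hzc := hz t ht
    have hwc := hw t ht
    have hu1 : ∀ i, HasDerivAt (fun s => (Q.mulVec (z s) - w s + q) i)
        ((Q.mulVec (z' t) - w' t) i) t := by
      intro i
      have hmv : HasDerivAt (fun s => Q.mulVec (z s) i) (Q.mulVec (z' t) i) t := by
        have : HasDerivAt (fun s => ∑ j, Q i j * z s j) (∑ j, Q i j * z' t j) t :=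
          HasDerivAt.fun_sum fun j _ => (hasDerivAt_pi.1 hzc j).const_mul (Q i j)
        simpa [Matrix.mulVec, dotProduct] using this
      have := (hmv.sub (hasDerivAt_pi.1 hwc i)).add_const (q i)
      simpa [Pi.sub_apply, Pi.add_apply] using this
    have hu2 : ∀ i, HasDerivAt (fun s => z s i * w s i)
        (w t i * z' t i + z t i * w' t i) t := by
      intro i
      have := (hasDerivAt_pi.1 hzc i).fun_mul (hasDerivAt_pi.1 hwc i)
      refine this.congr_deriv ?_
      ring
    have hs1 : HasDerivAt (fun s => ∑ i, (Q.mulVec (z s) - w s + q) i ^ 2)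
        (∑ i, 2 * (Q.mulVec (z t) - w t + q) i * (Q.mulVec (z' t) - w' t) i) t := by
      apply HasDerivAt.fun_sum
      intro i _
      have := (hu1 i).fun_pow 2
      refine this.congr_deriv ?_
      push_cast
      ring
    have hs2 : HasDerivAt (fun s => ∑ i, (z s i * w s i) ^ 2)
        (∑ i, 2 * (z t i * w t i) * (w t i * z' t i + z t i * w' t i)) t := by
      apply HasDerivAt.fun_sum
      intro i _
      have := (hu2 i).fun_pow 2
      refine this.congr_deriv ?_
      push_cast
      ring
    exact hs1.add hs2
  -- identify the derivative with the fixed-time form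
  have hd : ∀ t, 0 ≤ t → HasDerivAt φ
      (if φ t = 0 then 0 else -(2*k) * Real.sqrt (φ t) * (1 + φ t)) t := by
    intro t ht
    have h := hderiv t ht
    by_cases hc : φ t = 0
    · rw [if_pos hc]
      obtain ⟨ha, hb⟩ := (hzero t).1 hc
      convert h using 1
      symm
      have e1 : (∑ i, 2 * (Q.mulVec (z t) - w t + q) i * (Q.mulVec (z' t) - w' t) i) = 0 :=
        Finset.sum_eq_zero fun i _ => by rw [ha i]; ring
      have e2 : (∑ i, 2 * (z t i * w t i) * (w t i * z' t i + z t i * w' t i)) = 0 :=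
        Finset.sum_eq_zero fun i _ => by rw [hb i]; ring
      rw [e1, e2, add_zero]
    · rw [if_neg hc]
      have hne : Q.mulVec (z t) - w t + q ≠ 0 ∨ (fun i => z t i * w t i) ≠ 0 := by
        by_contra hcon
        push_neg at hcon
        exact hc ((hzero t).2 ⟨fun i => by rw [hcon.1]; rfl,
          fun i => congrFun hcon.2 i⟩)
      obtain ⟨h1, h2⟩ := hflow t ht hne
      set c : ℝ := -(k * (1 / Real.sqrt (φ t) + Real.sqrt (φ t))) with hcdef
      have hφpos : 0 < φ t := lt_of_le_of_ne (hφ0 t) (Ne.symm hc)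
      have hspos : 0 < Real.sqrt (φ t) := Real.sqrt_pos.2 hφpos
      have hsq : Real.sqrt (φ t) ^ 2 = φ t := Real.sq_sqrt (hφ0 t)
      convert h using 1
      symm
      have e1 : (∑ i, 2 * (Q.mulVec (z t) - w t + q) i * (Q.mulVec (z' t) - w' t) i)
          = 2 * c * ∑ i, (Q.mulVec (z t) - w t + q) i ^ 2 := by
        rw [h1, Finset.mul_sum]
        exact Finset.sum_congr rfl fun i _ => by
          simp only [Pi.smul_apply, smul_eq_mul, hcdef, hφdef]; ring
      have e2 : (∑ i, 2 * (z t i * w t i) * (w t i * z' t i + z t i * w' t i))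
          = 2 * c * ∑ i, (z t i * w t i) ^ 2 := by
        have h2' : ∀ i, w t i * z' t i + z t i * w' t i = c * (z t i * w t i) := by
          intro i
          have := congrFun h2 i
          simpa [Pi.smul_apply, smul_eq_mul, hcdef, hφdef] using this
        rw [Finset.mul_sum]
        exact Finset.sum_congr rfl fun i _ => by rw [h2' i]; ring
      rw [e1, e2, ← mul_add]
      have haux : ∀ p : ℝ, 0 < p →
          2 * (-(k * (1 / Real.sqrt p + Real.sqrt p))) * p
            = -(2*k) * Real.sqrt p * (1 + p) := by
        intro p hp
        obtain ⟨s, hs, rfl⟩ : ∃ s, 0 < s ∧ p = s ^ 2 :=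
          ⟨Real.sqrt p, Real.sqrt_pos.2 hp, (Real.sq_sqrt hp.le).symm⟩
        rw [Real.sqrt_sq hs.le]
        field_simp
      have := haux (φ t) hφpos
      calc 2 * c * ((∑ i, (Q.mulVec (z t) - w t + q) i ^ 2) + ∑ i, (z t i * w t i) ^ 2)
          = 2 * (-(k * (1 / Real.sqrt (φ t) + Real.sqrt (φ t)))) * φ t := by rw [hcdef]
        _ = -(2*k) * Real.sqrt (φ t) * (1 + φ t) := this
  have hfinal := stmt15_key φ k Tp hTp hk hφ0 hd
  intro t ht
  obtain ⟨ha, hb⟩ := (hzero t).1 (hfinal t ht)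
  exact ⟨funext ha, hb⟩
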